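/- Monotonicity of Ψ: Let n = p₁⋯p_K with primes p₁ < ⋯ < p_K, fix s ∈ {1,…,K}, and let q be a prime with q > p_s and q ∉ {p_{s+1},…,p_K}. Let m = n/p_s. Then Ψ(qm) ≥ Ψ(n) + (q − p_s)·Ψ(m). -/

import Mathlib

def QuasiIndep (S : Set ℂ) : Prop :=
  ∀ (s : Finset ℂ) (ε : ℂ → ℤ), ↑s ⊆ S →
    (∀ z ∈ s, ε z = 0 ∨ ε z = 1 ∨ ε z = -1) →
    (∑ z ∈ s, (ε z : ℂ) * z) = 0 → ∀ z ∈ s, ε z = 0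

/-- `Psi N` is the maximal cardinality of a quasi-independent set of N-th roots of unity. -/
noncomputable def Psi (N : ℕ) : ℕ :=
  sSup {k | ∃ E : Finset ℂ, (∀ z ∈ E, z ^ N = 1) ∧ QuasiIndep ↑E ∧ E.card = k}

open Polynomial in
lemma card_le_of_roots {N : ℕ} (hN : 0 < N) (E : Finset ℂ) (hE : ∀ z ∈ E, z ^ N = 1) :
    E.card ≤ N := by
  classical
  have h : E ⊆ (nthRoots N (1 : ℂ)).toFinset := by
    intro z hz
    simp only [Multiset.mem_toFinset, mem_nthRoots hN]
    exact hE z hz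
  calc E.card ≤ _ := Finset.card_le_card h
    _ ≤ Multiset.card (nthRoots N (1 : ℂ)) := Multiset.toFinset_card_le _
    _ ≤ N := card_nthRoots N 1

lemma psi_bdd {N : ℕ} (hN : 0 < N) :
    BddAbove {k | ∃ E : Finset ℂ, (∀ z ∈ E, z ^ N = 1) ∧ QuasiIndep ↑E ∧ E.card = k} :=
  ⟨N, fun _ ⟨E, h1, _, h3⟩ => h3 ▸ card_le_of_roots hN E h1⟩

lemma psi_spec {N : ℕ} (hN : 0 < N) :
    ∃ E : Finset ℂ, (∀ z ∈ E, z ^ N = 1) ∧ QuasiIndep ↑E ∧ E.card = Psi N := by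
  have h0 : (0 : ℕ) ∈ {k | ∃ E : Finset ℂ, (∀ z ∈ E, z ^ N = 1) ∧ QuasiIndep ↑E ∧ E.card = k} :=
    ⟨∅, by simp, fun s ε hs _ _ z hz => absurd (hs hz) (by simp), rfl⟩
  exact Nat.sSup_mem ⟨0, h0⟩ (psi_bdd hN)

lemma le_psi {N k : ℕ} (hN : 0 < N) (E : Finset ℂ) (h1 : ∀ z ∈ E, z ^ N = 1)
    (h2 : QuasiIndep ↑E) (h3 : E.card = k) : k ≤ Psi N :=
  le_csSup (psi_bdd hN) ⟨E, h1, h2, h3⟩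

lemma eq_one_of_pows {q m : ℕ} (hcop : Nat.Coprime q m) {v : ℂ}
    (hvq : v ^ q = 1) (hvm : v ^ m = 1) (hq : 0 < q) : v = 1 := by
  have h1 : orderOf v ∣ q := orderOf_dvd_of_pow_eq_one hvq
  have h2 : orderOf v ∣ m := orderOf_dvd_of_pow_eq_one hvm
  have : orderOf v ∣ 1 := hcop ▸ Nat.dvd_gcd h1 h2
  exact orderOf_eq_one_iff.mp (Nat.eq_one_of_dvd_one this)

lemma decomp_unique {q m : ℕ} (hcop : Nat.Coprime q m) (hm : 0 < m) {ω : ℂ}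
    (hω : IsPrimitiveRoot ω q)
    {a a' : ℕ} (ha : a < q) (ha' : a' < q) {u u' : ℂ} (hu : u ^ m = 1) (hu' : u' ^ m = 1)
    (h : ω ^ a * u = ω ^ a' * u') : a = a' ∧ u = u' := by
  have hq0 : 0 < q := lt_of_le_of_lt (Nat.zero_le a) ha
  have hω0 : ω ≠ 0 := fun h0 => by
    simpa [h0, zero_pow hq0.ne'] using hω.pow_eq_one
  have hu0 : u ≠ 0 := fun h0 => by
    rw [h0, zero_pow hm.ne'] at hu; exact zero_ne_one hu
  have hu0' : u' ≠ 0 := fun h0 => by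
    rw [h0, zero_pow hm.ne'] at hu'; exact zero_ne_one hu'
  have hv : (ω ^ a * (ω ^ a')⁻¹) = u' * u⁻¹ := by
    field_simp
    rw [h]
  have hvq : (ω ^ a * (ω ^ a')⁻¹) ^ q = 1 := by
    rw [mul_pow, inv_pow, ← pow_mul, ← pow_mul, mul_comm a q, mul_comm a' q,
      pow_mul, pow_mul, hω.pow_eq_one, one_pow, one_pow, inv_one, mul_one]
  have hvm : (ω ^ a * (ω ^ a')⁻¹) ^ m = 1 := by
    rw [hv, mul_pow, inv_pow, hu, hu', inv_one, mul_one]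
  have hone : (ω ^ a * (ω ^ a')⁻¹) = 1 := eq_one_of_pows hcop hvq hvm hq0
  have haa : ω ^ a = ω ^ a' := by
    field_simp at hone
    exact hone
  have : a = a' := hω.pow_inj ha ha' haa
  refine ⟨this, ?_⟩
  subst this
  exact mul_left_cancel₀ (pow_ne_zero _ hω0) h

noncomputable def pickA (q m : ℕ) (ω w : ℂ) : ℕ :=
  if h : ∃ a, a < q ∧ w ^ m = ω ^ (a * m) then h.choose else 0

lemma pickA_eq {q m : ℕ} (hcop : Nat.Coprime q m) (hm : 0 < m) {ω : ℂ}
    (hω : IsPrimitiveRoot ω q) {a : ℕ} (ha : a < q) {u : ℂ} (hu : u ^ m = 1) :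
    pickA q m ω (ω ^ a * u) = a := by
  have hq0 : 0 < q := lt_of_le_of_lt (Nat.zero_le a) ha
  have hex : ∃ b, b < q ∧ (ω ^ a * u) ^ m = ω ^ (b * m) :=
    ⟨a, ha, by rw [mul_pow, hu, mul_one, ← pow_mul]⟩
  rw [pickA, dif_pos hex]
  obtain ⟨hb, hbe⟩ := hex.choose_spec
  have heq : ω ^ (hex.choose * m) = ω ^ (a * m) := by
    rw [← hbe, mul_pow, hu, mul_one, ← pow_mul]
  have hω0 : ω ≠ 0 := fun h0 => by
    simpa [h0, zero_pow hq0.ne'] using hω.pow_eq_one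
  have hz : ω ^ ((hex.choose * m : ℕ) : ℤ) / ω ^ ((a * m : ℕ) : ℤ) = 1 := by
    rw [zpow_natCast, zpow_natCast, heq, div_self (pow_ne_zero _ hω0)]
  rw [← zpow_sub₀ hω0] at hz
  have hdvd : (q : ℤ) ∣ ((hex.choose * m : ℕ) : ℤ) - ((a * m : ℕ) : ℤ) :=
    (hω.zpow_eq_one_iff_dvd _).mp hz
  have hdvd2 : (q : ℤ) ∣ ((hex.choose : ℤ) - a) * m := by
    convert hdvd using 1; push_cast; ring
  have hcop' : IsCoprime (q : ℤ) (m : ℤ) := Int.isCoprime_iff_gcd_eq_one.mpr (by exact_mod_cast hcop)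
  have hdvd3 : (q : ℤ) ∣ ((hex.choose : ℤ) - a) := hcop'.dvd_of_dvd_mul_right hdvd2
  obtain ⟨k, hk⟩ := hdvd3
  have hb' : (hex.choose : ℤ) < q := by exact_mod_cast hb
  have ha' : (a : ℤ) < q := by exact_mod_cast ha
  have hq' : (0 : ℤ) < q := by exact_mod_cast hq0
  have hc0 : (0 : ℤ) ≤ hex.choose := Int.natCast_nonneg _
  have ha0 : (0 : ℤ) ≤ a := Int.natCast_nonneg _
  have : (hex.choose : ℤ) = a := by
    rcases lt_trichotomy k 0 with hk0 | hk0 | hk0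
    · nlinarith
    · rw [hk0, mul_zero] at hk; omega
    · nlinarith
  exact_mod_cast this
open IntermediateField Polynomial in
lemma adjoin_pair {q m : ℕ} (hq : 1 < q) (hm : 0 < m) (hcop : Nat.Coprime q m)
    {ξ : ℂ} (hξ : IsPrimitiveRoot ξ (q * m)) :
    adjoin ℚ ({ξ ^ q, ξ ^ m} : Set ℂ) = ℚ⟮ξ⟯ := by
  have hqm0 : 0 < q * m := Nat.mul_pos (by omega) hm
  apply le_antisymm
  · rw [adjoin_le_iff]
    rintro x hx
    rcases hx with rfl | hx
    · exact pow_mem (mem_adjoin_simple_self ℚ ξ) q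
    · rcases hx with rfl
      exact pow_mem (mem_adjoin_simple_self ℚ ξ) m
  · rw [adjoin_simple_le_iff]
    obtain ⟨e, -, he⟩ := Nat.exists_mul_mod_eq_one_of_coprime (hcop.symm) hq
    have hme1 : m * e ≠ 0 := by
      intro h0; rw [h0, Nat.zero_mod] at he; omega
    have hmemq : ξ ^ q ∈ adjoin ℚ ({ξ ^ q, ξ ^ m} : Set ℂ) :=
      subset_adjoin ℚ _ (Set.mem_insert _ _)
    have hmemm : ξ ^ m ∈ adjoin ℚ ({ξ ^ q, ξ ^ m} : Set ℂ) :=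
      subset_adjoin ℚ _ (Set.mem_insert_of_mem _ rfl)
    have hkey : ∃ t : ℕ, 1 ≤ t ∧ (q * m) ∣ t - 1 ∧
        ξ ^ t ∈ adjoin ℚ ({ξ ^ q, ξ ^ m} : Set ℂ) := by
      rcases eq_or_lt_of_le (show 1 ≤ m from hm) with hm1 | hm1
      · have hm1' : m = 1 := hm1.symm
        subst hm1'
        rw [one_mul] at he hme1
        refine ⟨e, by omega, ?_, ?_⟩
        · have hd := Nat.div_add_mod e q
          have : q ∣ e - 1 := ⟨e / q, by omega⟩
          simpa using this
        · have hee : ξ ^ e = (ξ ^ 1) ^ e := by rw [pow_one]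
          rw [hee]
          exact pow_mem hmemm e
      · obtain ⟨f, -, hf⟩ := Nat.exists_mul_mod_eq_one_of_coprime hcop hm1
        have hqf1 : q * f ≠ 0 := by
          intro h0; rw [h0, Nat.zero_mod] at hf; omega
        refine ⟨m * e + q * f, by omega, ?_, ?_⟩
        · have h1 : q ∣ m * e + q * f - 1 := by
            have hd := Nat.div_add_mod (m * e) q
            have h2 : m * e + q * f - 1 = q * (m * e / q) + q * f := by omega
            rw [h2]
            exact Dvd.dvd.add (Dvd.intro _ rfl) (Dvd.intro _ rfl)
          have h2 : m ∣ m * e + q * f - 1 := by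
            have hd := Nat.div_add_mod (q * f) m
            have h3 : m * e + q * f - 1 = m * (q * f / m) + m * e := by omega
            rw [h3]
            exact Dvd.dvd.add (Dvd.intro _ rfl) (Dvd.intro _ rfl)
          exact Nat.Coprime.mul_dvd_of_dvd_of_dvd hcop h1 h2
        · rw [pow_add, pow_mul, pow_mul]
          exact mul_mem (pow_mem hmemm e) (pow_mem hmemq f)
    obtain ⟨t, ht1, ht2, ht3⟩ := hkey
    have hξt : ξ ^ t = ξ := by
      obtain ⟨c, hc⟩ := ht2
      have ht : t = q * m * c + 1 := by omega
      rw [ht, pow_add, pow_mul, hξ.pow_eq_one, one_pow, one_mul, pow_one]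
    rwa [hξt] at ht3

set_option synthInstance.maxHeartbeats 1000000 in
set_option maxHeartbeats 1000000 in
open IntermediateField Polynomial in
lemma key_lemma {q m : ℕ} (hq : q.Prime) (hm : 0 < m) (hcop : Nat.Coprime q m)
    {ξ : ℂ} (hξ : IsPrimitiveRoot ξ (q * m)) (S : ℕ → ℂ)
    (hS : ∀ a < q, S a ∈ adjoin ℚ ({ξ ^ q} : Set ℂ))
    (hsum : ∑ a ∈ Finset.range q, (ξ ^ m) ^ a * S a = 0) :
    ∀ a < q, S a = S (q - 1) := by
  have hq1 : 1 < q := hq.one_lt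
  have hqm0 : 0 < q * m := Nat.mul_pos (by omega) hm
  set ω : ℂ := ξ ^ m with hωdef
  set μ : ℂ := ξ ^ q with hμdef
  have hω : IsPrimitiveRoot ω q := hξ.pow hqm0 (mul_comm q m)
  have hμ : IsPrimitiveRoot μ m := hξ.pow hqm0 rfl
  set K : IntermediateField ℚ ℂ := ℚ⟮μ⟯ with hKdef
  have hμint : IsIntegral ℚ μ :=
    ⟨X ^ m - C 1, monic_X_pow_sub_C 1 hm.ne', by
      simp [hμ.pow_eq_one]⟩
  have hξint : IsIntegral ℚ ξ :=
    ⟨X ^ (q * m) - C 1, monic_X_pow_sub_C 1 hqm0.ne', by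
      simp [hξ.pow_eq_one]⟩
  have hωint : IsIntegral K ω :=
    ⟨X ^ q - C 1, monic_X_pow_sub_C 1 (by omega), by
      simp [hω.pow_eq_one]⟩
  have d1 : Module.finrank ℚ K = m.totient := by
    rw [hKdef, adjoin.finrank hμint, ← cyclotomic_eq_minpoly_rat hμ hm, natDegree_cyclotomic]
  have d2 : Module.finrank K K⟮ω⟯ = (minpoly K ω).natDegree := adjoin.finrank hωint
  have d3 : Module.finrank ℚ (IntermediateField.restrictScalars ℚ K⟮ω⟯) = (q * m).totient := by
    have e1 : IntermediateField.restrictScalars ℚ K⟮ω⟯ = adjoin ℚ ({μ} ∪ {ω} : Set ℂ) :=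
      adjoin_adjoin_left ℚ {μ} {ω}
    have e2 : ({μ} ∪ {ω} : Set ℂ) = ({ξ ^ q, ξ ^ m} : Set ℂ) := rfl
    rw [e1, e2, adjoin_pair hq1 hm hcop hξ, adjoin.finrank hξint,
      ← cyclotomic_eq_minpoly_rat hξ hqm0, natDegree_cyclotomic]
  have tower : Module.finrank ℚ K * Module.finrank K K⟮ω⟯ =
      Module.finrank ℚ (IntermediateField.restrictScalars ℚ K⟮ω⟯) :=
    Module.finrank_mul_finrank ℚ K K⟮ω⟯
  have htot : (q * m).totient = (q - 1) * m.totient := by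
    rw [Nat.totient_mul hcop, Nat.totient_prime hq]
  have hdeg : (minpoly K ω).natDegree = q - 1 := by
    have h0 : 0 < m.totient := Nat.totient_pos.mpr hm
    have h1 : m.totient * (minpoly K ω).natDegree = (q - 1) * m.totient := by
      calc m.totient * (minpoly K ω).natDegree
          = Module.finrank ℚ K * Module.finrank K K⟮ω⟯ := by rw [d1, d2]
        _ = Module.finrank ℚ (IntermediateField.restrictScalars ℚ K⟮ω⟯) := tower
        _ = (q * m).totient := d3
        _ = (q - 1) * m.totient := htot
    have h2 : m.totient * (minpoly K ω).natDegree = m.totient * (q - 1) := by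
      rw [h1, mul_comm]
    exact Nat.eq_of_mul_eq_mul_left h0 h2
  classical
  set Sk : ℕ → K := fun a => if h : a < q then ⟨S a, hS a h⟩ else 0 with hSkdef
  have hSk : ∀ a, a < q → (Sk a : ℂ) = S a := by
    intro a ha; rw [hSkdef]; simp [ha]
  set P : Polynomial K := ∑ a ∈ Finset.range q, C (Sk a - Sk (q - 1)) * X ^ a with hPdef
  have hcoeff : ∀ j, P.coeff j = if j < q then Sk j - Sk (q - 1) else 0 := by
    intro j
    rw [hPdef, finset_sum_coeff]
    simp only [coeff_C_mul, coeff_X_pow, mul_ite, mul_one, mul_zero]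
    rw [Finset.sum_ite_eq]
    simp [Finset.mem_range]
  have hPeval : aeval ω P = 0 := by
    rw [hPdef, map_sum]
    simp only [map_mul, aeval_C, map_pow, aeval_X]
    have hterm : ∀ a ∈ Finset.range q,
        (algebraMap K ℂ) (Sk a - Sk (q - 1)) * ω ^ a = ω ^ a * S a - S (q - 1) * ω ^ a := by
      intro a ha
      rw [map_sub]
      have c1 : (algebraMap K ℂ) (Sk a) = S a := hSk a (Finset.mem_range.mp ha)
      have c2 : (algebraMap K ℂ) (Sk (q - 1)) = S (q - 1) := hSk _ (by omega)
      rw [c1, c2]; ring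
    rw [Finset.sum_congr rfl hterm, Finset.sum_sub_distrib, hsum, ← Finset.mul_sum,
      hω.geom_sum_eq_zero hq1, mul_zero, sub_zero]
  have hP0 : P = 0 := by
    by_contra hne
    have hle : (minpoly K ω).natDegree ≤ P.natDegree :=
      natDegree_le_of_dvd (minpoly.dvd K ω hPeval) hne
    have hlead : P.coeff P.natDegree ≠ 0 := by
      rw [coeff_natDegree]
      exact leadingCoeff_ne_zero.mpr hne
    rw [hcoeff] at hlead
    by_cases hd : P.natDegree < q
    · have hdd : P.natDegree = q - 1 := by omega
      rw [if_pos hd, hdd, sub_self] at hlead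
      exact hlead rfl
    · rw [if_neg hd] at hlead
      exact hlead rfl
  intro a ha
  have hc := hcoeff a
  rw [hP0, coeff_zero, if_pos ha] at hc
  have hSkeq : Sk a = Sk (q - 1) := by
    have := hc.symm
    rwa [sub_eq_zero] at this
  have hfin : (Sk a : ℂ) = ((Sk (q - 1) : K) : ℂ) := by rw [hSkeq]
  rwa [hSk a ha, hSk (q - 1) (by omega)] at hfin
set_option maxHeartbeats 8000000 in
theorem stmt_15 (n p q m : ℕ) (hn : 1 < n) (hsf : Squarefree n)
    (hp : p.Prime) (hpn : p ∣ n) (hm : m = n / p)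
    (hq : q.Prime) (hpq : p < q) (hqm : ¬ q ∣ m) :
    Psi n + (q - p) * Psi m ≤ Psi (q * m) := by
  classical
  have hp2 : 2 ≤ p := hp.two_le
  have hq2 : 2 ≤ q := hq.two_le
  have hn0 : 0 < n := by omega
  have hnm : n = p * m := by rw [hm, Nat.mul_div_cancel' hpn]
  have hm0 : 0 < m := by
    rcases Nat.eq_zero_or_pos m with h | h
    · rw [h, mul_zero] at hnm; omega
    · exact h
  have hpm : ¬ p ∣ m := by
    intro hdvd
    obtain ⟨c, hc⟩ := hdvd
    have hsq : p * p ∣ n := by rw [hnm, hc]; exact ⟨c, by ring⟩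
    have := hsf p hsq
    rw [Nat.isUnit_iff] at this
    omega
  have hcpm : p.Coprime m := (Nat.Prime.coprime_iff_not_dvd hp).mpr hpm
  have hcqm : q.Coprime m := (Nat.Prime.coprime_iff_not_dvd hq).mpr hqm
  have hqm0 : 0 < q * m := Nat.mul_pos (by omega) hm0
  haveI : NeZero m := ⟨hm0.ne'⟩
  haveI : NeZero p := ⟨by omega⟩
  obtain ⟨ξ, hξ⟩ : ∃ ξ : ℂ, IsPrimitiveRoot ξ (q * m) :=
    ⟨_, Complex.isPrimitiveRoot_exp _ (by omega)⟩
  obtain ⟨η, hη⟩ : ∃ η : ℂ, IsPrimitiveRoot η p :=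
    ⟨_, Complex.isPrimitiveRoot_exp _ (by omega)⟩
  have hω : IsPrimitiveRoot (ξ ^ m) q := hξ.pow hqm0 (mul_comm q m)
  have hμ : IsPrimitiveRoot (ξ ^ q) m := hξ.pow hqm0 rfl
  have hω0 : (ξ : ℂ) ^ m ≠ 0 := fun h0 => by
    simpa [h0, zero_pow (show q ≠ 0 by omega)] using hω.pow_eq_one
  have hη0 : (η : ℂ) ≠ 0 := fun h0 => by
    simpa [h0, zero_pow (show p ≠ 0 by omega)] using hη.pow_eq_one
  obtain ⟨E, hE1, hE2, hE3⟩ := psi_spec (N := n) hn0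
  obtain ⟨F, hF1, hF2, hF3⟩ := psi_spec (N := m) hm0
  set ψ : ℂ → ℂ := fun z => (ξ ^ m) ^ pickA p m η z * (z * (η ^ pickA p m η z)⁻¹) with hψdef
  -- decomposition of elements of E
  have hEkey : ∀ z ∈ E, ∃ a u, a < p ∧ u ^ m = 1 ∧ z = η ^ a * u ∧ pickA p m η z = a ∧
      ψ z = (ξ ^ m) ^ a * u ∧ pickA q m (ξ ^ m) (ψ z) = a := by
    intro z hz
    have hz0 : z ≠ 0 := fun h0 => by
      simpa [h0, zero_pow (show n ≠ 0 by omega)] using hE1 z hz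
    have hz1 : (z ^ m) ^ p = 1 := by
      rw [← pow_mul, mul_comm m p, ← hnm]; exact hE1 z hz
    have hηm : IsPrimitiveRoot (η ^ m) p := hη.pow_of_coprime m hcpm.symm
    obtain ⟨a, ha, hae⟩ := hηm.eq_pow_of_pow_eq_one hz1
    have hηa0 : η ^ a ≠ 0 := pow_ne_zero _ hη0
    have hzm0 : z ^ m ≠ 0 := pow_ne_zero _ hz0
    have h1 : (η ^ a) ^ m = z ^ m := by
      rw [← pow_mul, mul_comm a m, pow_mul]; exact hae
    have hum : (z * (η ^ a)⁻¹) ^ m = 1 := by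
      rw [mul_pow, inv_pow, h1, mul_inv_cancel₀ hzm0]
    have hzd : z = η ^ a * (z * (η ^ a)⁻¹) := by field_simp
    have hpa : pickA p m η z = a := by
      conv_lhs => rw [hzd]
      exact pickA_eq hcpm hm0 hη ha hum
    have hψz : ψ z = (ξ ^ m) ^ a * (z * (η ^ a)⁻¹) := by
      rw [hψdef]
      simp only [hpa]
    refine ⟨a, z * (η ^ a)⁻¹, ha, hum, hzd, hpa, hψz, ?_⟩
    rw [hψz]
    exact pickA_eq hcqm hm0 hω (ha.trans hpq) hum
  have hψinj : ∀ z ∈ E, ∀ z' ∈ E, ψ z = ψ z' → z = z' := by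
    intro z hz z' hz' hzz
    obtain ⟨a, u, ha, hu, hzd, _, hψz, _⟩ := hEkey z hz
    obtain ⟨a', u', ha', hu', hzd', _, hψz', _⟩ := hEkey z' hz'
    rw [hψz, hψz'] at hzz
    obtain ⟨haa, huu⟩ := decomp_unique hcqm hm0 hω (ha.trans hpq) (ha'.trans hpq) hu hu' hzz
    rw [hzd, hzd', haa, huu]
  set G : Finset ℂ :=
    E.image ψ ∪ (Finset.Ico p q).biUnion (fun a => F.image (fun u => (ξ ^ m) ^ a * u))
    with hGdef
  have hGmem : ∀ w, w ∈ G ↔ ((∃ z ∈ E, ψ z = w) ∨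
      ∃ a, (p ≤ a ∧ a < q) ∧ ∃ u ∈ F, (ξ ^ m) ^ a * u = w) := by
    intro w
    rw [hGdef]
    simp [Finset.mem_union, Finset.mem_biUnion, Finset.mem_image, Finset.mem_Ico]
  have haux : ∀ (a : ℕ) (u : ℂ), u ^ m = 1 → ((ξ ^ m) ^ a * u) ^ (q * m) = 1 := by
    intro a u hu
    rw [mul_pow]
    have h1 : ((ξ ^ m) ^ a) ^ (q * m) = 1 := by
      rw [← pow_mul, show a * (q * m) = q * (a * m) by ring, pow_mul, hω.pow_eq_one, one_pow]
    have h2 : u ^ (q * m) = 1 := by rw [mul_comm q m, pow_mul, hu, one_pow]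
    rw [h1, h2, one_mul]
  have hG1 : ∀ w ∈ G, w ^ (q * m) = 1 := by
    intro w hw
    rcases (hGmem w).mp hw with ⟨z, hz, rfl⟩ | ⟨a, haI, u, hu, rfl⟩
    · obtain ⟨a, u, ha, hum, _, _, hψz, _⟩ := hEkey z hz
      rw [hψz]; exact haux a u hum
    · exact haux a u (hF1 u hu)
  have hGcard : G.card = E.card + (q - p) * F.card := by
    have hdisjB : ∀ a ∈ Finset.Ico p q, ∀ a' ∈ Finset.Ico p q, a ≠ a' →
        Disjoint (F.image (fun u => (ξ ^ m) ^ a * u)) (F.image (fun u => (ξ ^ m) ^ a' * u)) := by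
      intro a haI a' haI' hne
      rw [Finset.disjoint_left]
      rintro w hw hw'
      obtain ⟨u, hu, rfl⟩ := Finset.mem_image.mp hw
      obtain ⟨u', hu', he⟩ := Finset.mem_image.mp hw'
      have := decomp_unique hcqm hm0 hω (Finset.mem_Ico.mp haI').2 (Finset.mem_Ico.mp haI).2
        (hF1 u' hu') (hF1 u hu) he
      exact hne this.1.symm
    have hcardB : ((Finset.Ico p q).biUnion fun a => F.image (fun u => (ξ ^ m) ^ a * u)).card
        = (q - p) * F.card := by
      rw [Finset.card_biUnion hdisjB]
      have hcc : ∀ a ∈ Finset.Ico p q, (F.image fun u => (ξ ^ m) ^ a * u).card = F.card :=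
        fun a _ => Finset.card_image_of_injOn
          (fun x _ y _ h => mul_left_cancel₀ (pow_ne_zero _ hω0) h)
      calc ∑ a ∈ Finset.Ico p q, (F.image fun u => (ξ ^ m) ^ a * u).card
          = ∑ _a ∈ Finset.Ico p q, F.card := Finset.sum_congr rfl hcc
        _ = (q - p) * F.card := by rw [Finset.sum_const, Nat.card_Ico, smul_eq_mul]
    have hdisjEB : Disjoint (E.image ψ)
        ((Finset.Ico p q).biUnion fun a => F.image (fun u => (ξ ^ m) ^ a * u)) := by
      rw [Finset.disjoint_left]
      rintro w hw hw'
      obtain ⟨z, hz, rfl⟩ := Finset.mem_image.mp hw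
      obtain ⟨a, haI, hwa⟩ := Finset.mem_biUnion.mp hw'
      obtain ⟨u, hu, he⟩ := Finset.mem_image.mp hwa
      obtain ⟨a0, u0, ha0, hu0, _, _, hψz, _⟩ := hEkey z hz
      have := decomp_unique hcqm hm0 hω (Finset.mem_Ico.mp haI).2 (ha0.trans hpq)
        (hF1 u hu) hu0 (by rw [he, hψz])
      have h1 := (Finset.mem_Ico.mp haI).1
      omega
    rw [hGdef, Finset.card_union_of_disjoint hdisjEB, hcardB,
      Finset.card_image_of_injOn (fun x hx y hy h => hψinj x hx y hy h)]
  have hGqi : QuasiIndep ↑G := by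
    intro s ε hs hε hsum0
    have hs' : ∀ w ∈ s, w ∈ G := fun w hw => hs hw
    have hsdec : ∀ w ∈ s, ∃ a u, a < q ∧ u ^ m = 1 ∧ w = (ξ ^ m) ^ a * u ∧
        pickA q m (ξ ^ m) w = a := by
      intro w hw
      rcases (hGmem w).mp (hs' w hw) with ⟨z, hz, rfl⟩ | ⟨a, haI, u, hu, rfl⟩
      · obtain ⟨a, u, ha, hum, _, _, hψz, hsl⟩ := hEkey z hz
        exact ⟨a, u, ha.trans hpq, hum, hψz, hsl⟩
      · exact ⟨a, u, haI.2, hF1 u hu, rfl, pickA_eq hcqm hm0 hω haI.2 (hF1 u hu)⟩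
    set Sf : ℕ → ℂ := fun a => ∑ w ∈ s.filter (fun w => pickA q m (ξ ^ m) w = a),
      (ε w : ℂ) * (w * ((ξ ^ m) ^ a)⁻¹) with hSfdef
    have hsum1 : ∑ a ∈ Finset.range q, (ξ ^ m) ^ a * Sf a = 0 := by
      have hmaps : ∀ w ∈ s, pickA q m (ξ ^ m) w ∈ Finset.range q := by
        intro w hw
        obtain ⟨a, u, ha, _, _, hsl⟩ := hsdec w hw
        rw [hsl]; exact Finset.mem_range.mpr ha
      calc ∑ a ∈ Finset.range q, (ξ ^ m) ^ a * Sf a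
          = ∑ a ∈ Finset.range q, ∑ w ∈ s.filter (fun w => pickA q m (ξ ^ m) w = a),
            (ε w : ℂ) * w := by
            refine Finset.sum_congr rfl fun a _ => ?_
            rw [hSfdef, Finset.mul_sum]
            refine Finset.sum_congr rfl fun w _ => ?_
            have h0 : ((ξ : ℂ) ^ m) ^ a ≠ 0 := pow_ne_zero _ hω0
            field_simp
        _ = ∑ w ∈ s, (ε w : ℂ) * w := Finset.sum_fiberwise_of_maps_to hmaps _
        _ = 0 := hsum0
    have hSfK : ∀ a, a < q → Sf a ∈ IntermediateField.adjoin ℚ ({ξ ^ q} : Set ℂ) := by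
      intro a _
      rw [hSfdef]
      refine sum_mem fun w hw => ?_
      obtain ⟨hws, hsl⟩ := Finset.mem_filter.mp hw
      obtain ⟨a', u, ha', hum, hwd, hsl'⟩ := hsdec w hws
      have haa : a' = a := by rw [← hsl, hsl']
      subst haa
      have hwu : w * ((ξ ^ m) ^ a')⁻¹ = u := by
        rw [hwd]; field_simp
      rw [hwu]
      obtain ⟨j, _, hju⟩ := hμ.eq_pow_of_pow_eq_one hum
      rw [← hju]
      have h1 : ((ε w : ℤ) : ℂ) ∈ IntermediateField.adjoin ℚ ({ξ ^ q} : Set ℂ) :=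
        IntermediateField.intCast_mem _ _
      have h2 : (ξ ^ q : ℂ) ∈ IntermediateField.adjoin ℚ ({ξ ^ q} : Set ℂ) :=
        IntermediateField.subset_adjoin ℚ _ rfl
      exact mul_mem h1 (pow_mem h2 j)
    have hkey : ∀ a, a < q → Sf a = Sf (q - 1) := by
      intro a ha
      exact key_lemma hq hm0 hcqm hξ Sf hSfK hsum1 a ha
    set sE : Finset ℂ := E.filter (fun z => ψ z ∈ s) with hsEdef
    have himgE : ∀ a, a < p → s.filter (fun w => pickA q m (ξ ^ m) w = a) =
        (sE.filter (fun z => pickA p m η z = a)).image ψ := by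
      intro a hap
      ext w
      simp only [Finset.mem_filter, Finset.mem_image, hsEdef]
      constructor
      · rintro ⟨hws, hsl⟩
        rcases (hGmem w).mp (hs' w hws) with ⟨z, hz, rfl⟩ | ⟨a', haI', u, hu, rfl⟩
        · obtain ⟨a0, u0, ha0, hu0, hzd, hpa0, hψz, hslz⟩ := hEkey z hz
          refine ⟨z, ⟨⟨hz, hws⟩, ?_⟩, rfl⟩
          rw [hpa0, ← hsl, hslz]
        · exfalso
          have hsl' : pickA q m (ξ ^ m) ((ξ ^ m) ^ a' * u) = a' :=
            pickA_eq hcqm hm0 hω haI'.2 (hF1 u hu)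
          rw [hsl'] at hsl
          omega
      · rintro ⟨z, ⟨⟨hz, hψs⟩, hpk⟩, rfl⟩
        refine ⟨hψs, ?_⟩
        obtain ⟨a0, u0, ha0, hu0, hzd, hpa0, hψz, hslz⟩ := hEkey z hz
        rw [hslz, ← hpa0, hpk]
    have hSfE : ∀ a, a < p → Sf a =
        ∑ z ∈ sE.filter (fun z => pickA p m η z = a), (ε (ψ z) : ℂ) * (z * (η ^ a)⁻¹) := by
      intro a hap
      rw [hSfdef]
      simp only []
      rw [himgE a hap]
      rw [Finset.sum_image (fun x hx y hy h => hψinj x (Finset.mem_filter.mp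
        ((Finset.mem_filter.mp hx).1)).1 y (Finset.mem_filter.mp
        ((Finset.mem_filter.mp hy).1)).1 h)]
      refine Finset.sum_congr rfl fun z hzf => ?_
      obtain ⟨hzsE, hpk⟩ := Finset.mem_filter.mp hzf
      obtain ⟨hzE, _⟩ := Finset.mem_filter.mp hzsE
      obtain ⟨a0, u0, ha0, hu0, hzd, hpa0, hψz, hslz⟩ := hEkey z hzE
      have ha0a : a0 = a := by rw [← hpk, hpa0]
      subst ha0a
      have h1 : ψ z * ((ξ ^ m) ^ a0)⁻¹ = u0 := by
        rw [hψz]; field_simp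
      have h2 : z * (η ^ a0)⁻¹ = u0 := by
        rw [hzd]; field_simp
      rw [h1, h2]
    have hEsum : ∑ z ∈ sE, (ε (ψ z) : ℂ) * z = 0 := by
      have hmapsE : ∀ z ∈ sE, pickA p m η z ∈ Finset.range p := by
        intro z hz
        obtain ⟨hzE, _⟩ := Finset.mem_filter.mp hz
        obtain ⟨a0, u0, ha0, hu0, hzd, hpa0, _, _⟩ := hEkey z hzE
        rw [hpa0]
        exact Finset.mem_range.mpr ha0
      calc ∑ z ∈ sE, (ε (ψ z) : ℂ) * z
          = ∑ a ∈ Finset.range p, ∑ z ∈ sE.filter (fun z => pickA p m η z = a),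
            (ε (ψ z) : ℂ) * z := (Finset.sum_fiberwise_of_maps_to hmapsE _).symm
        _ = ∑ a ∈ Finset.range p, η ^ a * Sf a := by
            refine Finset.sum_congr rfl fun a haR => ?_
            have hap := Finset.mem_range.mp haR
            rw [hSfE a hap, Finset.mul_sum]
            refine Finset.sum_congr rfl fun z hzf => ?_
            have h0 : (η : ℂ) ^ a ≠ 0 := pow_ne_zero _ hη0
            field_simp
        _ = ∑ a ∈ Finset.range p, η ^ a * Sf (q - 1) := by
            refine Finset.sum_congr rfl fun a haR => ?_
            rw [hkey a (lt_trans (Finset.mem_range.mp haR) hpq)]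
        _ = (∑ a ∈ Finset.range p, η ^ a) * Sf (q - 1) := by rw [Finset.sum_mul]
        _ = 0 := by rw [hη.geom_sum_eq_zero hp.one_lt, zero_mul]
    have hEzero : ∀ z ∈ sE, ε (ψ z) = 0 := by
      have := hE2 sE (fun z => ε (ψ z))
        (fun z hz => by
          have hz' : z ∈ sE := hz
          exact Finset.mem_coe.mpr (Finset.mem_filter.mp hz').1)
        (fun z hz => hε (ψ z) (Finset.mem_filter.mp hz).2)
        hEsum
      exact this
    have hSf0 : ∀ a, a < q → Sf a = 0 := by
      have h00 : Sf 0 = 0 := by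
        rw [hSfE 0 (by omega)]
        refine Finset.sum_eq_zero fun z hzf => ?_
        have hz := (Finset.mem_filter.mp hzf).1
        rw [hEzero z hz]
        simp
      intro a ha
      rw [hkey a ha, ← hkey 0 (by omega), h00]
    have hFzero : ∀ a, p ≤ a → a < q →
        ∀ u ∈ F.filter (fun u => (ξ ^ m) ^ a * u ∈ s), ε ((ξ ^ m) ^ a * u) = 0 := by
      intro a hpa haq
      have himgF : s.filter (fun w => pickA q m (ξ ^ m) w = a) =
          (F.filter (fun u => (ξ ^ m) ^ a * u ∈ s)).image (fun u => (ξ ^ m) ^ a * u) := by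
        ext w
        simp only [Finset.mem_filter, Finset.mem_image]
        constructor
        · rintro ⟨hws, hsl⟩
          rcases (hGmem w).mp (hs' w hws) with ⟨z, hz, rfl⟩ | ⟨a', haI', u, hu, rfl⟩
          · exfalso
            obtain ⟨a0, u0, ha0, hu0, _, _, _, hslz⟩ := hEkey z hz
            rw [hslz] at hsl
            omega
          · have hsl' : pickA q m (ξ ^ m) ((ξ ^ m) ^ a' * u) = a' :=
              pickA_eq hcqm hm0 hω haI'.2 (hF1 u hu)
            have haa : a' = a := by rw [← hsl, hsl']
            subst haa
            exact ⟨u, ⟨hu, hws⟩, rfl⟩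
        · rintro ⟨u, ⟨hu, hus⟩, rfl⟩
          exact ⟨hus, pickA_eq hcqm hm0 hω haq (hF1 u hu)⟩
      have hFsum : ∑ u ∈ F.filter (fun u => (ξ ^ m) ^ a * u ∈ s),
          (ε ((ξ ^ m) ^ a * u) : ℂ) * u = 0 := by
        have hSfF : Sf a = ∑ u ∈ F.filter (fun u => (ξ ^ m) ^ a * u ∈ s),
            (ε ((ξ ^ m) ^ a * u) : ℂ) * u := by
          rw [hSfdef]
          simp only []
          rw [himgF]
          rw [Finset.sum_image (fun x _ y _ h => mul_left_cancel₀ (pow_ne_zero _ hω0) h)]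
          refine Finset.sum_congr rfl fun u hu => ?_
          have h0 : ((ξ : ℂ) ^ m) ^ a ≠ 0 := pow_ne_zero _ hω0
          field_simp
        rw [← hSfF]
        exact hSf0 a haq
      intro u hu
      have := hF2 (F.filter (fun u => (ξ ^ m) ^ a * u ∈ s)) (fun u => ε ((ξ ^ m) ^ a * u))
        (fun x hx => Finset.mem_coe.mpr (Finset.mem_filter.mp hx).1)
        (fun x hx => hε _ (Finset.mem_filter.mp hx).2)
        hFsum
      exact this u hu
    intro w hw
    rcases (hGmem w).mp (hs' w hw) with ⟨z, hz, rfl⟩ | ⟨a, haI, u, hu, rfl⟩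
    · exact hEzero z (Finset.mem_filter.mpr ⟨hz, hw⟩)
    · exact hFzero a haI.1 haI.2 u (Finset.mem_filter.mpr ⟨hu, hw⟩)
  calc Psi n + (q - p) * Psi m = G.card := by rw [hGcard, hE3, hF3]
    _ ≤ Psi (q * m) := le_psi hqm0 G hG1 hGqi rfl
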